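/- Let z be a complex number with z \notin \mathbb{Z} and let 0 < t < 1. Then \sum_{n \in \mathbb{Z}} e^{2\pi i n t}/(2\pi i (n+z))^2 = (e^{-2\pi i z t}/(1 - e^{-2\pi i z})) \cdot (t + 1/(e^{2\pi i z} - 1}). -/

import Mathlib

open Complex

private lemma aux_integral_id_mul_exp {c : ℂ} (hc : c ≠ 0) :
    ∫ x in (0:ℝ)..1, (x : ℂ) * Complex.exp (c * x)
      = (1 / c - 1 / c ^ 2) * Complex.exp c + 1 / c ^ 2 := by
  have D : ∀ x : ℝ, HasDerivAt (fun y : ℝ => ((y : ℂ) / c - 1 / c ^ 2) * Complex.exp (c * y))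
      ((x : ℂ) * Complex.exp (c * x)) x := by
    intro x
    have h1 : HasDerivAt (fun y : ℝ => ((y : ℂ) / c - 1 / c ^ 2)) (1 / c) x := by
      exact (((hasDerivAt_id (x : ℂ)).div_const c).sub_const (1 / c ^ 2)).comp_ofReal
    have h2 : HasDerivAt (fun y : ℝ => Complex.exp (c * y)) (c * Complex.exp (c * x)) x := by
      have : HasDerivAt (fun y : ℂ => Complex.exp (c * y)) (c * Complex.exp (c * x)) (x : ℂ) := by
        simpa [mul_comm, Function.comp_def] using (Complex.hasDerivAt_exp (c * x)).comp (x : ℂ)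
          (((hasDerivAt_id (x : ℂ)).const_mul c))
      exact this.comp_ofReal
    have := h1.mul h2
    refine this.congr_deriv ?_
    linear_combination (((x : ℂ) * Complex.exp (c * x)) - (1 / c) * Complex.exp (c * x)) * mul_inv_cancel₀ hc
  rw [intervalIntegral.integral_eq_sub_of_hasDerivAt (fun x _ => D x)
    ((Continuous.intervalIntegrable (by fun_prop :
      Continuous fun x : ℝ => (x : ℂ) * Complex.exp (c * x)) 0 1))]
  push_cast
  field_simp
  simp only [mul_zero, Complex.exp_zero]
  ring

private lemma aux_algebra (c q : ℂ) (hc : c ≠ 0) (h1q : (1:ℂ) - q ≠ 0) :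
    1 / (1 - q) * ((1 / c - 1 / c ^ 2) * q + 1 / c ^ 2) + q / (1 - q) / (1 - q) * ((q - 1) / c)
      = 1 / c ^ 2 := by
  linear_combination (1 / c ^ 2 - q * (1 - q)⁻¹ * c⁻¹) * (mul_inv_cancel₀ h1q)

private lemma aux_summable (z : ℂ) (hz : ∀ m : ℤ, z ≠ (m : ℂ)) :
    Summable (fun n : ℤ => 1 / (2 * (Real.pi : ℂ) * Complex.I * ((n : ℂ) + z)) ^ 2) := by
  have hg : Summable (fun n : ℤ => 4 / (n : ℝ) ^ 2) := by
    have h1 := (Real.summable_one_div_int_pow (p := 2)).mpr one_lt_two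
    exact (h1.mul_left 4).congr fun n => by ring
  refine Summable.of_norm_bounded_eventually hg ?_
  rw [Filter.eventually_cofinite]
  set M : ℝ := 2 * ‖z‖ + 1 with hM
  have hM0 : 0 ≤ M := by positivity
  apply Set.Finite.subset (Set.finite_Icc (-⌈M⌉) ⌈M⌉)
  intro n hn
  simp only [Set.mem_setOf_eq] at hn
  by_contra hmem
  apply hn
  -- from ¬ n ∈ Icc we get M ≤ |(n:ℝ)|
  have hnM : M ≤ |(n : ℝ)| := by
    rcases not_and_or.mp (fun h => hmem ⟨h.1, h.2⟩) with h | h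
    · push_neg at h
      have : (n : ℝ) < -M := by
        have h2 : (n : ℝ) < -(⌈M⌉ : ℝ) := by exact_mod_cast Int.lt_iff_add_one_le.mpr (by omega)
        have := Int.le_ceil M
        linarith
      rw [_root_.abs_of_nonpos (by linarith)]
      linarith
    · push_neg at h
      have : M < (n : ℝ) := by
        have h2 : (⌈M⌉ : ℝ) < (n : ℝ) := by exact_mod_cast h
        have := Int.le_ceil M
        linarith
      rw [_root_.abs_of_nonneg (by linarith)]
      linarith
  -- now prove the bound
  have hzn : ‖z‖ ≤ (|(n : ℝ)| - 1) / 2 := by rw [hM] at hnM; linarith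
  have hn1 : 1 ≤ |(n : ℝ)| := by
    have : 0 ≤ ‖z‖ := norm_nonneg _
    rw [hM] at hnM; linarith
  have ha : |(n : ℝ)| / 2 ≤ ‖(n : ℂ) + z‖ := by
    have h3 : ‖(n : ℂ)‖ ≤ ‖(n : ℂ) + z‖ + ‖z‖ := by
      simpa using norm_add_le ((n : ℂ) + z) (-z)
    have h4 : ‖(n : ℂ)‖ = |(n : ℝ)| := by
      exact Complex.norm_intCast n
    rw [h4] at h3
    linarith
  have hπ : (1 : ℝ) ≤ Real.pi := by linarith [Real.pi_gt_three]
  have habs : ‖(1 : ℂ) / (2 * (Real.pi : ℂ) * Complex.I * ((n : ℂ) + z)) ^ 2‖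
      = 1 / (2 * Real.pi * ‖(n : ℂ) + z‖) ^ 2 := by
    rw [norm_div, norm_one, norm_pow]
    congr 2
    simp only [norm_mul, Complex.norm_I, Complex.norm_two,
      Complex.norm_real, Real.norm_eq_abs, abs_of_pos Real.pi_pos, mul_one]
  rw [habs]
  have hanneg : 0 ≤ ‖(n : ℂ) + z‖ := norm_nonneg _
  have hapos : 0 < ‖(n : ℂ) + z‖ := by linarith
  have hden : 0 < (2 * Real.pi * ‖(n : ℂ) + z‖) ^ 2 := by positivity
  have hnsq : 0 < (n : ℝ) ^ 2 := by
    have : (n : ℝ) ≠ 0 := by intro h; rw [h] at hn1; simp at hn1; linarith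
    positivity
  rw [div_le_div_iff₀ hden hnsq]
  have h2a : |(n : ℝ)| ≤ 2 * ‖(n : ℂ) + z‖ := by linarith
  have e1 : (n : ℝ) ^ 2 ≤ (2 * ‖(n : ℂ) + z‖) ^ 2 := by
    rw [← _root_.sq_abs (n : ℝ)]
    exact pow_le_pow_left₀ (abs_nonneg _) h2a 2
  have e2 : (2 * ‖(n : ℂ) + z‖) ^ 2 ≤ (2 * Real.pi * ‖(n : ℂ) + z‖) ^ 2 := by
    apply pow_le_pow_left₀ (by positivity)
    nlinarith
  nlinarith [hden]

/-- For `z ∈ ℂ \ ℤ` and `0 < t < 1`,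
`∑_{n∈ℤ} e^{2πint}/(2πi(n+z))² = (e^{-2πizt}/(1-e^{-2πiz}))·(t + 1/(e^{2πiz}-1))`,
the series being absolutely convergent. -/
theorem affine_bernoulli_series_two
    (z : ℂ) (hz : ∀ m : ℤ, z ≠ (m : ℂ))
    (t : ℝ) (h0 : 0 < t) (h1 : t < 1) :
    Summable (fun n : ℤ =>
      Complex.exp (2 * (Real.pi : ℂ) * Complex.I * (n : ℂ) * (t : ℂ)) /
        (2 * (Real.pi : ℂ) * Complex.I * ((n : ℂ) + z)) ^ 2) ∧
    (∑' n : ℤ,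
      Complex.exp (2 * (Real.pi : ℂ) * Complex.I * (n : ℂ) * (t : ℂ)) /
        (2 * (Real.pi : ℂ) * Complex.I * ((n : ℂ) + z)) ^ 2)
      = Complex.exp (-(2 * (Real.pi : ℂ) * Complex.I) * z * (t : ℂ)) /
          (1 - Complex.exp (-(2 * (Real.pi : ℂ) * Complex.I) * z)) *
        ((t : ℂ) + (Complex.exp (2 * (Real.pi : ℂ) * Complex.I * z) - 1)⁻¹) := by
  haveI : Fact ((0 : ℝ) < 1) := ⟨one_pos⟩
  have hπI : (2 * (Real.pi : ℂ) * Complex.I) ≠ 0 := by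
    simp [Real.pi_ne_zero, Complex.I_ne_zero, Complex.ofReal_ne_zero]
  set q : ℂ := Complex.exp (-(2 * (Real.pi : ℂ) * Complex.I) * z) with hq
  have hq1 : q ≠ 1 := by
    intro h
    obtain ⟨n, hn⟩ := Complex.exp_eq_one_iff.mp (hq ▸ h)
    apply hz (-n)
    have : -(2 * (Real.pi : ℂ) * Complex.I) * z = -(2 * (Real.pi : ℂ) * Complex.I) * (-(n : ℂ)) := by
      rw [hn]; ring
    have := mul_left_cancel₀ (neg_ne_zero.mpr hπI) this
    push_cast
    rw [this]
  have h1q : (1 : ℂ) - q ≠ 0 := fun h => hq1 (by linear_combination -h)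
  have hqq : Complex.exp (2 * (Real.pi : ℂ) * Complex.I * z) * q = 1 := by
    rw [hq, ← Complex.exp_add]
    simp [Complex.exp_zero]
  have hq0 : q ≠ 0 := Complex.exp_ne_zero _
  have hB : (Complex.exp (2 * (Real.pi : ℂ) * Complex.I * z) - 1)⁻¹ = q / (1 - q) := by
    have he1 : Complex.exp (2 * (Real.pi : ℂ) * Complex.I * z) - 1 ≠ 0 := by
      intro h
      have : Complex.exp (2 * (Real.pi : ℂ) * Complex.I * z) = 1 := by linear_combination h
      rw [this, one_mul] at hqq
      exact hq1 hqq
    rw [eq_div_iff h1q, inv_mul_eq_div, div_eq_iff he1]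
    linear_combination -hqq
  -- the function whose Fourier series we compute
  set F : ℝ → ℂ := fun x =>
    Complex.exp (-(2 * (Real.pi : ℂ) * Complex.I) * z * (x : ℂ)) / (1 - q) *
      ((x : ℂ) + (Complex.exp (2 * (Real.pi : ℂ) * Complex.I * z) - 1)⁻¹) with hF
  have hF01 : F 0 = F 1 := by
    simp only [hF, Complex.ofReal_zero, Complex.ofReal_one, mul_zero, mul_one,
      Complex.exp_zero, zero_add, one_div, hB, ← hq]
    field_simp
    ring
  have hFcont : Continuous F := by
    simp only [hF]
    fun_prop
  set f : C(AddCircle (1 : ℝ), ℂ) :=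
    ⟨AddCircle.liftIco 1 0 F, AddCircle.liftIco_zero_continuous hF01 hFcont.continuousOn⟩ with hf
  -- Fourier coefficients of f
  have hcoeff : ∀ n : ℤ, fourierCoeff (⇑f) n
      = 1 / (2 * (Real.pi : ℂ) * Complex.I * ((n : ℂ) + z)) ^ 2 := by
    intro n
    have hnz : (n : ℂ) + z ≠ 0 := by
      intro h
      apply hz (-n)
      push_cast
      linear_combination h
    set c : ℂ := -(2 * (Real.pi : ℂ) * Complex.I) * ((n : ℂ) + z) with hcdef
    have hc : c ≠ 0 := by
      rw [hcdef]
      exact mul_ne_zero (neg_ne_zero.mpr hπI) hnz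
    have hcq : Complex.exp c = q := by
      rw [hq, hcdef, show -(2 * (Real.pi : ℂ) * Complex.I) * ((n : ℂ) + z)
        = ((-n : ℤ) : ℂ) * (2 * (Real.pi : ℂ) * Complex.I) + -(2 * (Real.pi : ℂ) * Complex.I) * z
        by push_cast; ring, Complex.exp_add, Complex.exp_int_mul_two_pi_mul_I, one_mul]
    have key : ∀ x : ℝ, (fourier (-n) ((x : ℝ) : AddCircle (1:ℝ)) : ℂ) • F x
        = (1 / (1 - q)) * ((x : ℂ) * Complex.exp (c * x))
          + ((q / (1 - q)) / (1 - q)) * Complex.exp (c * x) := by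
      intro x
      have hE : Complex.exp (2 * (Real.pi : ℝ) * Complex.I * (-n : ℤ) * (x : ℝ) / (1:ℝ))
          * Complex.exp (-(2 * (Real.pi : ℂ) * Complex.I) * z * (x : ℂ))
          = Complex.exp (c * x) := by
        rw [← Complex.exp_add, hcdef]
        congr 1
        push_cast
        ring
      rw [smul_eq_mul, fourier_coe_apply, hF, hB]
      linear_combination (((x : ℂ) + q / (1 - q)) / (1 - q)) * hE
    have hint1 : IntervalIntegrable (fun x : ℝ => (1 / (1 - q)) * ((x : ℂ) * Complex.exp (c * x)))
        MeasureTheory.volume 0 1 := Continuous.intervalIntegrable (by fun_prop) 0 1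
    have hint2 : IntervalIntegrable (fun x : ℝ => ((q / (1 - q)) / (1 - q)) * Complex.exp (c * x))
        MeasureTheory.volume 0 1 := Continuous.intervalIntegrable (by fun_prop) 0 1
    have : fourierCoeff (⇑f) n
        = ∫ x in (0:ℝ)..1, (fourier (-n) ((x : ℝ) : AddCircle (1:ℝ)) : ℂ) • F x := by
      rw [hf]
      rw [show (⇑(⟨AddCircle.liftIco 1 0 F, AddCircle.liftIco_zero_continuous hF01
        hFcont.continuousOn⟩ : C(AddCircle (1 : ℝ), ℂ))) = AddCircle.liftIco 1 0 F from rfl]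
      rw [fourierCoeff_liftIco_eq, fourierCoeffOn_eq_integral]
      norm_num
    have hEq := intervalIntegral.integral_congr (μ := MeasureTheory.volume)
      (f := fun x : ℝ => (fourier (-n) ((x : ℝ) : AddCircle (1:ℝ)) : ℂ) • F x)
      (g := fun x : ℝ => (1 / (1 - q)) * ((x : ℂ) * Complex.exp (c * x))
          + ((q / (1 - q)) / (1 - q)) * Complex.exp (c * x))
      (a := 0) (b := 1) (fun x _ => key x)
    rw [this, hEq,
      intervalIntegral.integral_add hint1 hint2,
      intervalIntegral.integral_const_mul, intervalIntegral.integral_const_mul,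
      aux_integral_id_mul_exp hc, _root_.integral_exp_mul_complex hc]
    rw [hcq]
    rw [show Complex.exp (c * (1:ℝ)) = q by rw [Complex.ofReal_one, mul_one, hcq],
      show Complex.exp (c * (0:ℝ)) = 1 by norm_num]
    rw [show (2 * (Real.pi : ℂ) * Complex.I * ((n : ℂ) + z)) ^ 2 = c ^ 2 by rw [hcdef]; ring]
    linear_combination aux_algebra c q hc h1q
  have hsummable : Summable (fourierCoeff (⇑f)) := by
    have : fourierCoeff (⇑f) = fun n : ℤ =>
        1 / (2 * (Real.pi : ℂ) * Complex.I * ((n : ℂ) + z)) ^ 2 := funext hcoeff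
    rw [this]
    exact aux_summable z hz
  have H := has_pointwise_sum_fourier_series_of_summable hsummable ((t : ℝ) : AddCircle (1:ℝ))
  have hft : f ((t : ℝ) : AddCircle (1:ℝ)) = F t := by
    show AddCircle.liftIco 1 0 F ((t : ℝ) : AddCircle (1:ℝ)) = F t
    exact AddCircle.liftIco_zero_coe_apply ⟨h0.le, h1⟩
  have hfun : (fun n : ℤ => fourierCoeff (⇑f) n • (fourier n ((t : ℝ) : AddCircle (1:ℝ)) : ℂ))
      = fun n : ℤ => Complex.exp (2 * (Real.pi : ℂ) * Complex.I * (n : ℂ) * (t : ℂ)) /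
        (2 * (Real.pi : ℂ) * Complex.I * ((n : ℂ) + z)) ^ 2 := by
    funext n
    rw [smul_eq_mul, hcoeff n, fourier_coe_apply]
    push_cast
    rw [div_one]
    ring
  rw [hft, hfun] at H
  exact ⟨H.summable, H.tsum_eq⟩
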